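/- Let G be a finite simple undirected graph, let s and t be two distinct vertices of G, let H be the subdivision of G, and let ℓ ≥ 1 be an integer. Let C be a minimal s-t cut in G with |C| ≤ ℓ and let W = {x_e : e ∈ C} be the corresponding set of subdivision vertices in H. Then every vertex of the closed neighborhood N_H[W] = W ∪ {v : v is adjacent in H to some vertex of W} other than s and t belongs to some minimal s-t separator of H of size at most ℓ. -/

import Mathlib

/-- `C` is an `s`-`t` cut in `G`: a set of edges of `G` whose deletion disconnects `s` from `t`. -/
def mseIsCut {V : Type*} (G : SimpleGraph V) (s t : V) (C : Set (Sym2 V)) : Prop :=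
  C ⊆ G.edgeSet ∧ ¬ (G.deleteEdges C).Reachable s t

/-- `C` is a minimal `s`-`t` cut: no proper subset of `C` is an `s`-`t` cut. -/
def mseIsMinCut {V : Type*} (G : SimpleGraph V) (s t : V) (C : Set (Sym2 V)) : Prop :=
  mseIsCut G s t C ∧ ∀ C' ⊂ C, ¬ mseIsCut G s t C'

/-- `S` is an `a`-`b` separator in `H`: `a, b ∉ S` and deleting the vertices of `S`
disconnects `a` from `b`. -/
def mseIsSeparator {W : Type*} (H : SimpleGraph W) (a b : W) (S : Set W) : Prop :=
  a ∉ S ∧ b ∉ S ∧ ∀ (ha : a ∈ (Sᶜ : Set W)) (hb : b ∈ (Sᶜ : Set W)),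
    ¬ (H.induce (Sᶜ : Set W)).Reachable ⟨a, ha⟩ ⟨b, hb⟩

/-- `S` is a minimal `a`-`b` separator: no proper subset of `S` is an `a`-`b` separator. -/
def mseIsMinSeparator {W : Type*} (H : SimpleGraph W) (a b : W) (S : Set W) : Prop :=
  mseIsSeparator H a b S ∧ ∀ S' ⊂ S, ¬ mseIsSeparator H a b S'

/-- The subdivision of `G`. -/
def mseSubdiv {V : Type*} (G : SimpleGraph V) : SimpleGraph (V ⊕ G.edgeSet) :=
  SimpleGraph.fromRel (fun x y =>
    ∃ (u : V) (e : G.edgeSet), u ∈ (e : Sym2 V) ∧ x = Sum.inl u ∧ y = Sum.inr e)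

/-- Projection lemma: a walk in the subdivision avoiding `S` projects to a walk in `G`
avoiding suitable edges. -/
lemma mse_projA {V : Type*} (G : SimpleGraph V) (S : Set (V ⊕ G.edgeSet)) (D : Set (Sym2 V))
    (hD : ∀ e : G.edgeSet, Sum.inr e ∉ S → (∀ u ∈ (e : Sym2 V), Sum.inl u ∉ S) →
      (e : Sym2 V) ∉ D) :
    ∀ (x y : ↥(Sᶜ : Set (V ⊕ G.edgeSet))) (_ : ((mseSubdiv G).induce (Sᶜ : Set _)).Walk x y),
      (∀ a b, x.1 = Sum.inl a → y.1 = Sum.inl b → (G.deleteEdges D).Reachable a b) ∧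
      (∀ (e : G.edgeSet) (b : V), x.1 = Sum.inr e → y.1 = Sum.inl b →
        ∀ u ∈ (e : Sym2 V), Sum.inl u ∉ S → (G.deleteEdges D).Reachable u b) := by
  intro x y p
  induction p with
  | nil =>
    constructor
    · intro a b hx hy
      obtain rfl := Sum.inl_injective (hx.symm.trans hy)
      exact SimpleGraph.Reachable.refl _
    · intro e b hx hy
      exact absurd (hx.symm.trans hy) (by simp)
  | @cons x z y h p ih =>
    have hadj : (mseSubdiv G).Adj x.1 z.1 := h
    rw [mseSubdiv, SimpleGraph.fromRel_adj] at hadj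
    constructor
    · intro a b hx hy
      rcases hadj.2 with ⟨u, e, hue, hxe, hze⟩ | ⟨u, e, hue, hze, hxe⟩
      · have hua : u = a := Sum.inl_injective (hxe.symm.trans hx)
        subst hua
        exact ih.2 e b hze hy u hue (hx ▸ x.2)
      · exact absurd (hx.symm.trans hxe) (by simp)
    · intro e b hx hy u hu hus
      rcases hadj.2 with ⟨u', e', hue', hxe, hze⟩ | ⟨w, e', hwe, hze, hxe⟩
      · exact absurd (hx.symm.trans hxe) (by simp)
      · rw [show e' = e from Sum.inr_injective (hxe.symm.trans hx)] at hwe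
        have hw := ih.1 w b hze hy
        by_cases huw : u = w
        · subst huw; exact hw
        · have he : (e : Sym2 V) = s(u, w) := (Sym2.mem_and_mem_iff huw).mp ⟨hu, hwe⟩
          have hGadj : G.Adj u w := by
            have h2 := e.2
            rw [he, SimpleGraph.mem_edgeSet] at h2
            exact h2
          have heD : (e : Sym2 V) ∉ D := by
            apply hD e (by rw [← hx]; exact x.2)
            intro v hv
            rw [he, Sym2.mem_iff] at hv
            rcases hv with rfl | rfl
            · exact hus
            · rw [← hze]; exact z.2
          have : (G.deleteEdges D).Adj u w := by
            rw [SimpleGraph.deleteEdges_adj]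
            exact ⟨hGadj, by rw [← he]; exact heD⟩
          exact this.reachable.trans hw

/-- Lifting lemma: a walk in `G` avoiding the edges `C'` lifts to a walk in the subdivision
avoiding any `S` consisting only of subdivision vertices of `C'`. -/
lemma mse_liftB {V : Type*} (G : SimpleGraph V) (C' : Set (Sym2 V)) (S : Set (V ⊕ G.edgeSet))
    (hSe : ∀ e : G.edgeSet, (e : Sym2 V) ∉ C' → Sum.inr e ∉ S)
    (hinl : ∀ w : V, Sum.inl w ∈ (Sᶜ : Set (V ⊕ G.edgeSet)))
    {a b : V} (h : (G.deleteEdges C').Reachable a b) :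
    ((mseSubdiv G).induce (Sᶜ : Set _)).Reachable ⟨Sum.inl a, hinl a⟩ ⟨Sum.inl b, hinl b⟩ := by
  obtain ⟨p⟩ := h
  induction p with
  | nil => exact SimpleGraph.Reachable.refl _
  | @cons a c b h p ih =>
    rw [SimpleGraph.deleteEdges_adj] at h
    obtain ⟨hG, hC'⟩ := h
    have heE : s(a, c) ∈ G.edgeSet := hG
    set e : G.edgeSet := ⟨s(a, c), heE⟩ with he
    have hre : Sum.inr e ∈ (Sᶜ : Set (V ⊕ G.edgeSet)) := hSe e hC'
    have adj1 : ((mseSubdiv G).induce (Sᶜ : Set _)).Adj ⟨Sum.inl a, hinl a⟩ ⟨Sum.inr e, hre⟩ := by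
      show (mseSubdiv G).Adj (Sum.inl a) (Sum.inr e)
      rw [mseSubdiv, SimpleGraph.fromRel_adj]
      exact ⟨by simp, Or.inl ⟨a, e, by simp [he], rfl, rfl⟩⟩
    have adj2 : ((mseSubdiv G).induce (Sᶜ : Set _)).Adj ⟨Sum.inr e, hre⟩ ⟨Sum.inl c, hinl c⟩ := by
      show (mseSubdiv G).Adj (Sum.inr e) (Sum.inl c)
      rw [mseSubdiv, SimpleGraph.fromRel_adj]
      exact ⟨by simp, Or.inr ⟨c, e, by simp [he], rfl, rfl⟩⟩
    exact (adj1.reachable.trans adj2.reachable).trans ih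

/-- Any set satisfying a property contains a minimal subset satisfying it (finite setting). -/
lemma mse_exists_min {α : Type*} [Finite α] (P : Set α → Prop) (S₀ : Set α) (h : P S₀) :
    ∃ S, S ⊆ S₀ ∧ P S ∧ ∀ S' ⊂ S, ¬ P S' := by
  have key : ∀ n (T : Set α), T.ncard ≤ n → P T → ∃ S, S ⊆ T ∧ P S ∧ ∀ S' ⊂ S, ¬ P S' := by
    intro n
    induction n with
    | zero =>
      intro T hT hPT
      have : T = ∅ := by
        rw [← Set.ncard_eq_zero (Set.toFinite T)]
        omega
      subst this
      exact ⟨∅, subset_rfl, hPT,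
        fun S' hS' _ => hS'.2 ((Set.subset_empty_iff.mp hS'.1) ▸ subset_rfl)⟩
    | succ n ih =>
      intro T hT hPT
      by_cases h' : ∃ S' ⊂ T, P S'
      · obtain ⟨S', hsub, hP⟩ := h'
        have hlt : S'.ncard < T.ncard := Set.ncard_lt_ncard hsub (Set.toFinite T)
        obtain ⟨S, h1, h2, h3⟩ := ih S' (by omega) hP
        exact ⟨S, h1.trans hsub.subset, h2, h3⟩
      · exact ⟨T, subset_rfl, hPT, fun S' hss hP => h' ⟨S', hss, hP⟩⟩
  exact key S₀.ncard S₀ le_rfl h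

/-- No set consisting only of subdivision vertices of a proper subset of a minimal cut
is a separator. -/
lemma mse_notsep {V : Type*} (G : SimpleGraph V) (s t : V) (C : Set (Sym2 V))
    (hC : mseIsMinCut G s t C) (S' : Set (V ⊕ G.edgeSet)) (Cset : Set (Sym2 V))
    (hCsub : Cset ⊂ C)
    (hS' : ∀ x ∈ S', ∃ e : G.edgeSet, x = Sum.inr e ∧ (e : Sym2 V) ∈ Cset) :
    ¬ mseIsSeparator (mseSubdiv G) (Sum.inl s) (Sum.inl t) S' := by
  intro hsep
  have hreach : (G.deleteEdges Cset).Reachable s t := by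
    by_contra hnr
    exact hC.2 Cset hCsub ⟨hCsub.subset.trans hC.1.1, hnr⟩
  have hinl : ∀ w : V, Sum.inl w ∈ (S'ᶜ : Set (V ⊕ G.edgeSet)) := by
    intro w hw
    obtain ⟨e, he, -⟩ := hS' _ hw
    exact absurd he (by simp)
  have hSe : ∀ e : G.edgeSet, (e : Sym2 V) ∉ Cset → Sum.inr e ∉ S' := by
    intro e he hmem
    obtain ⟨e', heq, hin⟩ := hS' _ hmem
    rw [show e' = e from (Sum.inr_injective heq).symm] at hin
    exact he hin
  exact hsep.2.2 (hinl s) (hinl t) (mse_liftB G Cset S' hSe hinl hreach)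

/-- The common final step. -/
lemma mse_helper {V : Type*} [Fintype V] (G : SimpleGraph V) (s t : V) (ℓ : ℕ)
    (S₀ : Set (V ⊕ G.edgeSet)) (v : V ⊕ G.edgeSet) (hv : v ∈ S₀)
    (hsep : mseIsSeparator (mseSubdiv G) (Sum.inl s) (Sum.inl t) S₀)
    (hmin : ∀ S' ⊆ S₀, v ∉ S' → ¬ mseIsSeparator (mseSubdiv G) (Sum.inl s) (Sum.inl t) S')
    (hcard : S₀.ncard ≤ ℓ) :
    ∃ S : Set (V ⊕ G.edgeSet),
      mseIsMinSeparator (mseSubdiv G) (Sum.inl s) (Sum.inl t) S ∧ S.ncard ≤ ℓ ∧ v ∈ S := by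
  obtain ⟨S, hsub, hPS, hminS⟩ :=
    mse_exists_min (mseIsSeparator (mseSubdiv G) (Sum.inl s) (Sum.inl t)) S₀ hsep
  refine ⟨S, ⟨hPS, hminS⟩, le_trans (Set.ncard_le_ncard hsub (Set.toFinite S₀)) hcard, ?_⟩
  by_contra hvS
  exact hmin S hsub hvS hPS

theorem stmt_9 {V : Type*} [Fintype V] (G : SimpleGraph V) (s t : V) (hst : s ≠ t)
    (ℓ : ℕ) (hℓ : 1 ≤ ℓ) (C : Set (Sym2 V))
    (hC : mseIsMinCut G s t C) (hCcard : C.ncard ≤ ℓ) :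
    ∀ v : V ⊕ G.edgeSet,
      v ∈ (Sum.inr '' {e : G.edgeSet | (e : Sym2 V) ∈ C}) ∪
          {u | ∃ w ∈ Sum.inr '' {e : G.edgeSet | (e : Sym2 V) ∈ C},
            (mseSubdiv G).Adj u w} →
      v ≠ Sum.inl s → v ≠ Sum.inl t →
      ∃ S : Set (V ⊕ G.edgeSet),
        mseIsMinSeparator (mseSubdiv G) (Sum.inl s) (Sum.inl t) S ∧
        S.ncard ≤ ℓ ∧ v ∈ S := by
  classical
  intro v hv hvs hvt
  have hCfin : C.Finite := Set.toFinite C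
  have hncut : ¬ (G.deleteEdges C).Reachable s t := hC.1.2
  -- the coercion image of the subdivision-vertex index set is C
  have hcoe : Subtype.val '' {e : G.edgeSet | (e : Sym2 V) ∈ C} = C := by
    ext f
    simp only [Set.mem_image, Set.mem_setOf_eq, Subtype.exists, exists_and_left]
    constructor
    · rintro ⟨g, hg, hmem, rfl⟩
      exact hg
    · intro hf
      exact ⟨f, hf, hC.1.1 hf, rfl⟩
  rcases hv with hv | hv
  · -- v is a subdivision vertex of an edge of C
    obtain ⟨e, he, rfl⟩ := hv
    set S₀ : Set (V ⊕ G.edgeSet) := Sum.inr '' {e : G.edgeSet | (e : Sym2 V) ∈ C} with hS₀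
    have hvS₀ : Sum.inr e ∈ S₀ := ⟨e, he, rfl⟩
    -- separator
    have hsep : mseIsSeparator (mseSubdiv G) (Sum.inl s) (Sum.inl t) S₀ := by
      refine ⟨by simp [hS₀], by simp [hS₀], fun ha hb hr => hncut ?_⟩
      obtain ⟨p⟩ := hr
      refine (mse_projA G S₀ C ?_ _ _ p).1 s t rfl rfl
      intro f hf _
      intro hfC
      exact hf ⟨f, hfC, rfl⟩
    -- cardinality
    have hcard : S₀.ncard ≤ ℓ := by
      have h2 := Set.ncard_image_of_injective {e : G.edgeSet | (e : Sym2 V) ∈ C}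
        Subtype.val_injective
      rw [hcoe] at h2
      calc S₀.ncard = {e : G.edgeSet | (e : Sym2 V) ∈ C}.ncard :=
            Set.ncard_image_of_injective _ Sum.inr_injective
        _ = C.ncard := h2.symm
        _ ≤ ℓ := hCcard
    -- minimality transfer
    refine mse_helper G s t ℓ S₀ _ hvS₀ hsep ?_ hcard
    intro S' hsub hvS'
    refine mse_notsep G s t C hC S' {f | ∃ h : f ∈ G.edgeSet, Sum.inr (⟨f, h⟩ : G.edgeSet) ∈ S'}
      ?_ ?_
    · constructor
      · intro f hf
        obtain ⟨h, hmem⟩ := hf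
        obtain ⟨g, hg, hgeq⟩ := hsub hmem
        rw [show g = ⟨f, h⟩ from Sum.inr_injective hgeq] at hg
        exact hg
      · intro hsubset
        obtain ⟨h, hmem⟩ := hsubset he
        exact hvS' (by rwa [show (⟨(e : Sym2 V), h⟩ : G.edgeSet) = e from Subtype.ext rfl] at hmem)
    · intro x hx
      obtain ⟨g, hg, rfl⟩ := hsub hx
      exact ⟨g, rfl, g.2, by rwa [show (⟨(g : Sym2 V), g.2⟩ : G.edgeSet) = g from Subtype.ext rfl]⟩
  · -- v is a neighbor of a subdivision vertex: an endpoint of an edge of C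
    obtain ⟨w, ⟨e, he, rfl⟩, hadj⟩ := hv
    rw [mseSubdiv, SimpleGraph.fromRel_adj] at hadj
    rcases hadj.2 with ⟨u, e', hue', rfl, heq⟩ | ⟨u', e', -, h1, -⟩
    swap
    · exact absurd h1 (by simp)
    rw [show e' = e from (Sum.inr_injective heq).symm] at hue'
    have hus : u ≠ s := fun h => hvs (by rw [h])
    have hut : u ≠ t := fun h => hvt (by rw [h])
    set A : Set G.edgeSet := {f : G.edgeSet | (f : Sym2 V) ∈ C ∧ u ∉ (f : Sym2 V)} with hA
    set S₀ : Set (V ⊕ G.edgeSet) := insert (Sum.inl u) (Sum.inr '' A) with hS₀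
    have hvS₀ : Sum.inl u ∈ S₀ := Set.mem_insert _ _
    -- separator
    have hsep : mseIsSeparator (mseSubdiv G) (Sum.inl s) (Sum.inl t) S₀ := by
      have hsni : Sum.inl s ∉ S₀ := by
        simp only [hS₀, Set.mem_insert_iff, Set.mem_image]
        push_neg
        exact ⟨fun h => hus.symm (Sum.inl_injective h), fun f _ => by simp⟩
      have htni : Sum.inl t ∉ S₀ := by
        simp only [hS₀, Set.mem_insert_iff, Set.mem_image]
        push_neg
        exact ⟨fun h => hut.symm (Sum.inl_injective h), fun f _ => by simp⟩
      refine ⟨hsni, htni, fun ha hb hr => hncut ?_⟩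
      obtain ⟨p⟩ := hr
      refine (mse_projA G S₀ C ?_ _ _ p).1 s t rfl rfl
      intro f hf hends hfC
      by_cases huf : u ∈ (f : Sym2 V)
      · exact hends u huf (Set.mem_insert _ _)
      · exact hf (Set.mem_insert_iff.mpr (Or.inr ⟨f, ⟨hfC, huf⟩, rfl⟩))
    -- cardinality
    have hcard : S₀.ncard ≤ ℓ := by
      have h1 : (Sum.inr '' A : Set (V ⊕ G.edgeSet)).ncard = A.ncard :=
        Set.ncard_image_of_injective _ Sum.inr_injective
      have h2 : A.ncard = (Subtype.val '' A).ncard :=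
        (Set.ncard_image_of_injective _ Subtype.val_injective).symm
      have h3 : Subtype.val '' A ⊆ C \ {(e : Sym2 V)} := by
        rintro f ⟨g, ⟨hg1, hg2⟩, rfl⟩
        refine ⟨hg1, ?_⟩
        intro hfe
        rw [Set.mem_singleton_iff] at hfe
        exact hg2 (hfe ▸ hue')
      have h4 : (Subtype.val '' A).ncard ≤ (C \ {(e : Sym2 V)}).ncard :=
        Set.ncard_le_ncard h3 hCfin.diff
      have h5 : (C \ {(e : Sym2 V)}).ncard = C.ncard - 1 :=
        Set.ncard_diff_singleton_of_mem (s := C) he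
      have h6 : 1 ≤ C.ncard := by
        rw [Nat.one_le_iff_ne_zero]
        intro h0
        rw [Set.ncard_eq_zero hCfin] at h0
        exact (h0 ▸ he : (e : Sym2 V) ∈ (∅ : Set (Sym2 V)))
      have h7 : S₀.ncard ≤ (Sum.inr '' A : Set (V ⊕ G.edgeSet)).ncard + 1 :=
        Set.ncard_insert_le _ _
      omega
    -- minimality transfer
    refine mse_helper G s t ℓ S₀ _ hvS₀ hsep ?_ hcard
    intro S' hsub hvS'
    refine mse_notsep G s t C hC S' {f | ∃ h : f ∈ G.edgeSet, Sum.inr (⟨f, h⟩ : G.edgeSet) ∈ S'}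
      ?_ ?_
    · constructor
      · intro f hf
        obtain ⟨h, hmem⟩ := hf
        rcases Set.mem_insert_iff.mp (hsub hmem) with h1 | ⟨g, hg, hgeq⟩
        · exact absurd h1 (by simp)
        · rw [show g = ⟨f, h⟩ from Sum.inr_injective hgeq] at hg
          exact hg.1
      · intro hsubset
        obtain ⟨h, hmem⟩ := hsubset he
        rcases Set.mem_insert_iff.mp (hsub hmem) with h1 | ⟨g, hg, hgeq⟩
        · exact absurd h1 (by simp)
        · rw [show g = ⟨(e : Sym2 V), h⟩ from Sum.inr_injective hgeq] at hg
          exact hg.2 hue'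
    · intro x hx
      rcases Set.mem_insert_iff.mp (hsub hx) with h1 | ⟨g, hg, hgeq⟩
      · exact absurd (h1 ▸ hx) hvS'
      · refine ⟨g, hgeq.symm, g.2, ?_⟩
        rw [show (⟨(g : Sym2 V), g.2⟩ : G.edgeSet) = g from Subtype.ext rfl, hgeq]
        exact hx
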